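/- Fix m goods, where good j has k_j segments with lengths d_{jt} ≥ 0 and rates u_{jt} ≥ 0, prices p ∈ ℝ_{>0}^m, and a target utility ū for which the program is feasible. Consider the knapsack linear program: minimize Σ_j p_j Σ_t x_{jt} subject to 0 ≤ x_{jt} ≤ d_{jt} for all j, t and Σ_j Σ_t u_{jt} x_{jt} = ū. Then its optimal solutions satisfy the weak gross substitutes property: if p' ∈ ℝ_{>0}^m with p' ≥ p componentwise and x is an optimal solution at prices p, then there exists an optimal solution x' at prices p' with x'_{jt} ≥ x_{jt} for every segment (j,t) of every good j with p'_j = p_j. -/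

import Mathlib

open Finset

private lemma knapsack_exists_min {ι : Type*} [Fintype ι] [DecidableEq ι]
    (D U P' : ι → ℝ) (ubar : ℝ) (X : ι → ℝ)
    (hXb : ∀ s, 0 ≤ X s ∧ X s ≤ D s) (hXu : ∑ s, U s * X s = ubar) :
    ∃ z : ι → ℝ, (∀ s, 0 ≤ z s ∧ z s ≤ D s) ∧ (∑ s, U s * z s = ubar) ∧
      (∀ w : ι → ℝ, (∀ s, 0 ≤ w s ∧ w s ≤ D s) → ∑ s, U s * w s = ubar →
        ∑ s, P' s * z s ≤ ∑ s, P' s * w s) := by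
  set K : Set (ι → ℝ) := {w | (∀ s, 0 ≤ w s ∧ w s ≤ D s) ∧ ∑ s, U s * w s = ubar} with hK
  have hKeq : K = (Set.pi Set.univ fun s => Set.Icc 0 (D s)) ∩ {w | ∑ s, U s * w s = ubar} := by
    ext w; constructor
    · rintro ⟨hb, hu⟩
      exact ⟨fun s _ => ⟨(hb s).1, (hb s).2⟩, hu⟩
    · rintro ⟨hb, hu⟩
      exact ⟨fun s => hb s (Set.mem_univ s), hu⟩
  have hKc : IsCompact K := by
    rw [hKeq]
    apply IsCompact.inter_right
    · exact isCompact_univ_pi (fun s => isCompact_Icc)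
    · exact isClosed_eq (by continuity) continuous_const
  have hKne : K.Nonempty := ⟨X, hXb, hXu⟩
  have hcont : ContinuousOn (fun w : ι → ℝ => ∑ s, P' s * w s) K := by
    apply Continuous.continuousOn; continuity
  obtain ⟨z, hzK, hzmin⟩ := hKc.exists_isMinOn hKne hcont
  exact ⟨z, hzK.1, hzK.2, fun w hwb hwu => hzmin (show w ∈ K from ⟨hwb, hwu⟩)⟩

private lemma sum_mul_exch {ι : Type*} [Fintype ι] [DecidableEq ι]
    (F w : ι → ℝ) (s0 s1 : ι) (c0 c1 : ℝ) :
    ∑ s, F s * (w s + (if s = s0 then c0 else 0) + (if s = s1 then c1 else 0))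
      = (∑ s, F s * w s) + F s0 * c0 + F s1 * c1 := by
  simp [mul_add, Finset.sum_add_distrib, mul_ite, mul_zero, Finset.sum_ite_eq']

private lemma knapsack_core {ι : Type*} [Fintype ι] [DecidableEq ι]
    (D U P P' : ι → ℝ) (hD : ∀ s, 0 ≤ D s) (hU : ∀ s, 0 ≤ U s)
    (hP : ∀ s, 0 < P s) (hPP' : ∀ s, P s ≤ P' s) (ubar : ℝ)
    (X : ι → ℝ) (hXb : ∀ s, 0 ≤ X s ∧ X s ≤ D s) (hXu : ∑ s, U s * X s = ubar)
    (hXopt : ∀ w : ι → ℝ, (∀ s, 0 ≤ w s ∧ w s ≤ D s) → ∑ s, U s * w s = ubar →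
      ∑ s, P s * X s ≤ ∑ s, P s * w s) :
    ∀ n : ℕ, ∀ z : ι → ℝ, (∀ s, 0 ≤ z s ∧ z s ≤ D s) → ∑ s, U s * z s = ubar →
    (∀ w : ι → ℝ, (∀ s, 0 ≤ w s ∧ w s ≤ D s) → ∑ s, U s * w s = ubar →
      ∑ s, P' s * z s ≤ ∑ s, P' s * w s) →
    (Finset.univ.filter (fun s => z s ≠ X s)).card ≤ n →
    ∃ z' : ι → ℝ, (∀ s, 0 ≤ z' s ∧ z' s ≤ D s) ∧ (∑ s, U s * z' s = ubar) ∧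
      (∀ w : ι → ℝ, (∀ s, 0 ≤ w s ∧ w s ≤ D s) → ∑ s, U s * w s = ubar →
        ∑ s, P' s * z' s ≤ ∑ s, P' s * w s) ∧
      (∀ s, P' s = P s → X s ≤ z' s) := by
  intro n
  induction n with
  | zero =>
    intro z hzb hzu hzopt hcard
    refine ⟨z, hzb, hzu, hzopt, fun s _ => ?_⟩
    have : z s = X s := by
      by_contra h
      have : s ∈ Finset.univ.filter (fun s => z s ≠ X s) := by simp [h]
      have := Finset.card_pos.mpr ⟨s, this⟩
      omega
    exact this.ge
  | succ n ih =>
    intro z hzb hzu hzopt hcard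
    by_cases hdone : ∀ s, P' s = P s → X s ≤ z s
    · exact ⟨z, hzb, hzu, hzopt, hdone⟩
    push_neg at hdone
    obtain ⟨s0, hs0P, hs0lt⟩ := hdone
    -- U s0 > 0
    have hUs0 : 0 < U s0 := by
      rcases (hU s0).lt_or_eq with h | h
      · exact h
      · exfalso
        -- replace X s0 by z s0 : strictly cheaper feasible solution
        set y : ι → ℝ := fun s => X s + (if s = s0 then z s0 - X s0 else 0) + (if s = s0 then 0 else 0) with hy
        have hys0 : y s0 = z s0 := by simp [hy]
        have hyo : ∀ s, s ≠ s0 → y s = X s := by intro s h; simp [hy, h]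
        have hyb : ∀ s, 0 ≤ y s ∧ y s ≤ D s := by
          intro s
          by_cases hs : s = s0
          · subst hs; rw [hys0]
            exact ⟨(hzb s).1, le_trans (le_of_lt hs0lt) (hXb s).2⟩
          · rw [hyo s hs]; exact hXb s
        have hyu : ∑ s, U s * y s = ubar := by
          rw [hy, sum_mul_exch, ← h]
          simp [hXu]
        have := hXopt y hyb hyu
        rw [hy, sum_mul_exch] at this
        nlinarith [mul_pos (hP s0) (sub_pos.mpr hs0lt)]
    -- find s1 with z s1 > X s1 and U s1 > 0
    have hsum : ∑ s, U s * (X s - z s) = 0 := by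
      simp only [mul_sub, Finset.sum_sub_distrib, hXu, hzu, sub_self]
    have hex : ∃ s1, U s1 * (X s1 - z s1) < 0 := by
      by_contra h
      push_neg at h
      have h0 : 0 < U s0 * (X s0 - z s0) := mul_pos hUs0 (by linarith)
      have := Finset.single_le_sum (f := fun s => U s * (X s - z s))
        (fun s _ => h s) (Finset.mem_univ s0)
      rw [hsum] at this
      have this : U s0 * (X s0 - z s0) ≤ 0 := this
      linarith
    obtain ⟨s1, hs1⟩ := hex
    have hUs1 : 0 < U s1 := by
      rcases (hU s1).lt_or_eq with h | h
      · exact h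
      · rw [← h] at hs1; simp at hs1
    have hs1lt : X s1 < z s1 := by nlinarith
    have hne : s0 ≠ s1 := fun h => by rw [h] at hs0lt; linarith
    set a := U s0 * (X s0 - z s0) with ha
    set b := U s1 * (z s1 - X s1) with hb
    have hapos : 0 < a := mul_pos hUs0 (by linarith)
    have hbpos : 0 < b := mul_pos hUs1 (by linarith)
    set ε := min a b with hε
    have hεpos : 0 < ε := lt_min hapos hbpos
    set c0 := ε / U s0 with hc0
    set c1 := ε / U s1 with hc1
    have hc0pos : 0 < c0 := div_pos hεpos hUs0
    have hc1pos : 0 < c1 := div_pos hεpos hUs1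
    have hc0le : c0 ≤ X s0 - z s0 := by
      rw [hc0, div_le_iff₀ hUs0]; calc ε ≤ a := min_le_left a b
                                     _ = (X s0 - z s0) * U s0 := by rw [ha]; ring
    have hc1le : c1 ≤ z s1 - X s1 := by
      rw [hc1, div_le_iff₀ hUs1]; calc ε ≤ b := min_le_right a b
                                     _ = (z s1 - X s1) * U s1 := by rw [hb]; ring
    have hUc0 : U s0 * c0 = ε := by rw [hc0]; field_simp
    have hUc1 : U s1 * c1 = ε := by rw [hc1]; field_simp
    -- key ratio inequality from optimality of X
    have hkey : P s0 * c0 ≤ P s1 * c1 := by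
      set y : ι → ℝ := fun s => X s + (if s = s0 then -c0 else 0) + (if s = s1 then c1 else 0) with hy
      have hys0 : y s0 = X s0 - c0 := by simp [hy, hne]; ring
      have hys1 : y s1 = X s1 + c1 := by simp [hy, hne.symm]
      have hyo : ∀ s, s ≠ s0 → s ≠ s1 → y s = X s := by intro s h0 h1; simp [hy, h0, h1]
      have hyb : ∀ s, 0 ≤ y s ∧ y s ≤ D s := by
        intro s
        by_cases h0 : s = s0
        · subst h0; rw [hys0]
          constructor
          · linarith [(hzb s).1]
          · linarith [(hXb s).2]
        by_cases h1 : s = s1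
        · subst h1; rw [hys1]
          constructor
          · linarith [(hXb s).1]
          · linarith [(hzb s).2]
        · rw [hyo s h0 h1]; exact hXb s
      have hyu : ∑ s, U s * y s = ubar := by
        rw [hy, sum_mul_exch]
        rw [hXu]; rw [mul_neg, hUc0, hUc1]; ring
      have := hXopt y hyb hyu
      rw [hy, sum_mul_exch] at this
      nlinarith
    -- the improved z'
    set z' : ι → ℝ := fun s => z s + (if s = s0 then c0 else 0) + (if s = s1 then -c1 else 0) with hz'
    have hz's0 : z' s0 = z s0 + c0 := by simp [hz', hne]
    have hz's1 : z' s1 = z s1 - c1 := by simp [hz', hne.symm]; ring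
    have hz'o : ∀ s, s ≠ s0 → s ≠ s1 → z' s = z s := by
      intro s h0 h1; simp [hz', h0, h1]
    have hz'b : ∀ s, 0 ≤ z' s ∧ z' s ≤ D s := by
      intro s
      by_cases h0 : s = s0
      · subst h0; rw [hz's0]
        constructor
        · linarith [(hzb s).1]
        · linarith [(hXb s).2]
      by_cases h1 : s = s1
      · subst h1; rw [hz's1]
        constructor
        · linarith [(hXb s).1]
        · linarith [(hzb s).2]
      · rw [hz'o s h0 h1]; exact hzb s
    have hz'u : ∑ s, U s * z' s = ubar := by
      rw [hz', sum_mul_exch, hzu, mul_neg, hUc0, hUc1]; ring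
    have hz'opt : ∀ w : ι → ℝ, (∀ s, 0 ≤ w s ∧ w s ≤ D s) → ∑ s, U s * w s = ubar →
        ∑ s, P' s * z' s ≤ ∑ s, P' s * w s := by
      intro w hwb hwu
      have h1 : ∑ s, P' s * z' s ≤ ∑ s, P' s * z s := by
        rw [hz', sum_mul_exch]
        have : P' s0 * c0 ≤ P' s1 * c1 := by
          rw [hs0P]
          calc P s0 * c0 ≤ P s1 * c1 := hkey
            _ ≤ P' s1 * c1 := by nlinarith [hPP' s1]
        nlinarith
      exact h1.trans (hzopt w hwb hwu)
    -- cardinality decreases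
    have hsub : Finset.univ.filter (fun s => z' s ≠ X s) ⊂ Finset.univ.filter (fun s => z s ≠ X s) := by
      constructor
      · intro s hs
        rw [Finset.mem_filter] at *
        refine ⟨Finset.mem_univ s, ?_⟩
        by_cases h0 : s = s0
        · subst h0; exact fun h => by linarith
        by_cases h1 : s = s1
        · subst h1; exact fun h => by linarith
        · rw [hz'o s h0 h1] at hs; exact hs.2
      · intro hsup
        rcases min_cases a b with ⟨hmin, _⟩ | ⟨hmin, _⟩
        · -- ε = a : z' s0 = X s0
          have : z' s0 = X s0 := by
            rw [hz's0, hc0, hε, hmin, ha]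
            field_simp
            ring
          have h0 : s0 ∈ Finset.univ.filter (fun s => z s ≠ X s) := by
            simp only [Finset.mem_filter, Finset.mem_univ, true_and]
            exact fun h => by linarith
          have := hsup h0
          rw [Finset.mem_filter] at this
          exact this.2 ‹z' s0 = X s0›
        · -- ε = b : z' s1 = X s1
          have : z' s1 = X s1 := by
            rw [hz's1, hc1, hε, hmin, hb]
            field_simp
            ring
          have h1 : s1 ∈ Finset.univ.filter (fun s => z s ≠ X s) := by
            simp only [Finset.mem_filter, Finset.mem_univ, true_and]
            exact fun h => by linarith
          have := hsup h1
          rw [Finset.mem_filter] at this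
          exact this.2 ‹z' s1 = X s1›
    have hcard' : (Finset.univ.filter (fun s => z' s ≠ X s)).card ≤ n := by
      have := Finset.card_lt_card hsub
      omega
    exact ih z' hz'b hz'u hz'opt hcard'

private lemma knapsack_sum_conv (m : ℕ) (k : Fin m → ℕ) (q : Fin m → ℝ)
    (y : ∀ j : Fin m, Fin (k j) → ℝ) :
    ∑ j, q j * ∑ t, y j t = ∑ s : (Σ j : Fin m, Fin (k j)), q s.1 * y s.1 s.2 := by
  rw [← Finset.univ_sigma_univ, Finset.sum_sigma]
  simp [Finset.mul_sum]

private lemma knapsack_util_conv (m : ℕ) (k : Fin m → ℕ) (uu : ∀ j : Fin m, Fin (k j) → ℝ)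
    (y : ∀ j : Fin m, Fin (k j) → ℝ) :
    ∑ j, ∑ t, uu j t * y j t = ∑ s : (Σ j : Fin m, Fin (k j)), uu s.1 s.2 * y s.1 s.2 := by
  rw [← Finset.univ_sigma_univ, Finset.sum_sigma]

/-- The optimal solutions of the knapsack linear program
`min Σ_j p_j Σ_t x_{jt}` subject to `0 ≤ x_{jt} ≤ d_{jt}` and
`Σ_j Σ_t u_{jt} x_{jt} = ū` satisfy the weak gross substitutes property: if prices
increase componentwise to `p' ≥ p`, then for any optimal solution `x` at `p` there is an
optimal solution `x'` at `p'` with `x'_{jt} ≥ x_{jt}` on every segment of every good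
whose price is unchanged. -/
theorem knapsack_lp_wgs
    (m : ℕ) (k : Fin m → ℕ) (d uu : ∀ j : Fin m, Fin (k j) → ℝ)
    (hd : ∀ j t, 0 ≤ d j t) (huu : ∀ j t, 0 ≤ uu j t)
    (p p' : Fin m → ℝ) (hp : ∀ j, 0 < p j) (hp' : ∀ j, 0 < p' j)
    (hpp' : ∀ j, p j ≤ p' j)
    (ubar : ℝ)
    (x : ∀ j : Fin m, Fin (k j) → ℝ)
    (hx_box : ∀ j t, 0 ≤ x j t ∧ x j t ≤ d j t)
    (hx_util : ∑ j, ∑ t, uu j t * x j t = ubar)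
    (hx_opt : ∀ y : ∀ j : Fin m, Fin (k j) → ℝ,
      (∀ j t, 0 ≤ y j t ∧ y j t ≤ d j t) → (∑ j, ∑ t, uu j t * y j t = ubar) →
      ∑ j, p j * ∑ t, x j t ≤ ∑ j, p j * ∑ t, y j t) :
    ∃ x' : ∀ j : Fin m, Fin (k j) → ℝ,
      (∀ j t, 0 ≤ x' j t ∧ x' j t ≤ d j t) ∧
      (∑ j, ∑ t, uu j t * x' j t = ubar) ∧
      (∀ y : ∀ j : Fin m, Fin (k j) → ℝ,
        (∀ j t, 0 ≤ y j t ∧ y j t ≤ d j t) → (∑ j, ∑ t, uu j t * y j t = ubar) →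
        ∑ j, p' j * ∑ t, x' j t ≤ ∑ j, p' j * ∑ t, y j t) ∧
      (∀ j, p' j = p j → ∀ t, x j t ≤ x' j t) := by
  set ι := (Σ j : Fin m, Fin (k j)) with hι
  set D : ι → ℝ := fun s => d s.1 s.2 with hD
  set U : ι → ℝ := fun s => uu s.1 s.2 with hU
  set P : ι → ℝ := fun s => p s.1 with hP
  set P' : ι → ℝ := fun s => p' s.1 with hP'
  set X : ι → ℝ := fun s => x s.1 s.2 with hX
  have hXb : ∀ s : ι, 0 ≤ X s ∧ X s ≤ D s := fun s => hx_box s.1 s.2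
  have hXu : ∑ s : ι, U s * X s = ubar := by
    rw [← knapsack_util_conv m k uu x]; exact hx_util
  have hXopt : ∀ w : ι → ℝ, (∀ s, 0 ≤ w s ∧ w s ≤ D s) → ∑ s, U s * w s = ubar →
      ∑ s, P s * X s ≤ ∑ s, P s * w s := by
    intro w hwb hwu
    have := hx_opt (fun j t => w ⟨j, t⟩) (fun j t => hwb ⟨j, t⟩)
      (by rw [knapsack_util_conv m k uu (fun j t => w ⟨j, t⟩)]; exact hwu)
    rw [knapsack_sum_conv m k p x, knapsack_sum_conv m k p (fun j t => w ⟨j, t⟩)] at this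
    exact this
  obtain ⟨z0, hz0b, hz0u, hz0opt⟩ := knapsack_exists_min D U P' ubar X hXb hXu
  obtain ⟨z', hz'b, hz'u, hz'opt, hz'ge⟩ :=
    knapsack_core D U P P' (fun s => hd s.1 s.2) (fun s => huu s.1 s.2)
      (fun s => hp s.1) (fun s => hpp' s.1) ubar X hXb hXu hXopt
      (Fintype.card ι) z0 hz0b hz0u hz0opt
      (le_trans (Finset.card_le_card (Finset.filter_subset _ _)) (le_of_eq (Finset.card_univ)))
  refine ⟨fun j t => z' ⟨j, t⟩, fun j t => hz'b ⟨j, t⟩, ?_, ?_, ?_⟩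
  · rw [knapsack_util_conv m k uu (fun j t => z' ⟨j, t⟩)]; exact hz'u
  · intro y hyb hyu
    rw [knapsack_sum_conv m k p' (fun j t => z' ⟨j, t⟩), knapsack_sum_conv m k p' y]
    exact hz'opt (fun s => y s.1 s.2) (fun s => hyb s.1 s.2)
      (by rw [← knapsack_util_conv m k uu y]; exact hyu)
  · intro j hj t
    exact hz'ge ⟨j, t⟩ hj
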